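/- Let s ≥ 2 and k ≥ 1 be integers, let θ be a bijection of the k-blocks (Fin k → Fin s) which is neither the identity map nor the digitwise complement map b ↦ (fun i => s − 1 − b i), and let F : ℝ → ℝ satisfy: for every admissible digit sequence a, F(∑_{n=0}^∞ a n / s^{n+1}) = ∑_{n=0}^∞ (Θ a) n / s^{n+1}. Then F is nowhere differentiable on [0,1): for every x ∈ [0,1), F is not differentiable at x. (Paper's Theorem 2 for functions of type f^s_k: every f^s_k other than x ↦ x and x ↦ 1 − x is nowhere differentiable.) -/

import Mathlib

open Finset Filter Topology

namespace Stmt14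

variable {s k : ℕ}

def val (s k : ℕ) (c : Fin k → Fin s) : ℕ :=
  (finFunctionFinEquiv (c ∘ Fin.rev) : ℕ)

lemma val_apply (c : Fin k → Fin s) :
    val s k c = ∑ i : Fin k, (c i : ℕ) * s ^ (k - 1 - (i : ℕ)) := by
  rw [val, finFunctionFinEquiv_apply]
  refine (Fintype.sum_bijective Fin.rev Fin.rev_bijective _ _ fun i => ?_).symm
  simp only [Function.comp_apply, Fin.rev_rev]
  congr 1
  rw [Fin.val_rev]
  congr 1
  omega

lemma val_lt (c : Fin k → Fin s) : val s k c < s ^ k :=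
  (finFunctionFinEquiv (c ∘ Fin.rev)).isLt

lemma val_inj {c c' : Fin k → Fin s} (h : val s k c = val s k c') : c = c' := by
  have h2 : finFunctionFinEquiv (c ∘ Fin.rev) = finFunctionFinEquiv (c' ∘ Fin.rev) :=
    Fin.ext h
  have h3 := finFunctionFinEquiv.injective h2
  funext i
  have h4 := congrFun h3 (Fin.rev i)
  simpa [Fin.rev_rev] using h4

lemma val_surj (v : ℕ) (hv : v < s ^ k) : ∃ c : Fin k → Fin s, val s k c = v := by
  refine ⟨(finFunctionFinEquiv.symm ⟨v, hv⟩) ∘ Fin.rev, ?_⟩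
  have h : ((finFunctionFinEquiv.symm ⟨v, hv⟩ : Fin k → Fin s) ∘ Fin.rev) ∘ Fin.rev
      = finFunctionFinEquiv.symm ⟨v, hv⟩ := by
    funext i; simp [Fin.rev_rev]
  rw [val, h, Equiv.apply_symm_apply]

lemma geom_nat (hs : 2 ≤ s) : ∀ K : ℕ, (s - 1) * ∑ i ∈ range K, s ^ i = s ^ K - 1 := by
  intro K
  induction K with
  | zero => simp
  | succ K ih =>
    rw [sum_range_succ, Nat.mul_add, ih]
    have h1 : 1 ≤ s ^ K := Nat.one_le_pow _ _ (by omega)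
    have h2 : s ^ (K + 1) = s * s ^ K := by ring
    have h3 : (s - 1) * s ^ K = s * s ^ K - s ^ K := by
      rw [Nat.sub_mul, one_mul]
    have h4 : s ^ K ≤ s * s ^ K := Nat.le_mul_of_pos_left _ (by omega)
    omega

lemma val_compl (hs : 2 ≤ s) (c : Fin k → Fin s) :
    val s k c + val s k (fun i => (⟨s - 1 - (c i : ℕ), by have := (c i).isLt; clear hs; omega⟩ : Fin s)) = s ^ k - 1 := by
  rw [val_apply, val_apply, ← Finset.sum_add_distrib]
  have h1 : ∀ i : Fin k, (c i : ℕ) * s ^ (k - 1 - (i:ℕ))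
      + (s - 1 - (c i : ℕ)) * s ^ (k - 1 - (i:ℕ)) = (s - 1) * s ^ (k - 1 - (i:ℕ)) := by
    intro i
    have := (c i).isLt
    rw [← Nat.add_mul]
    congr 1
    omega
  rw [Finset.sum_congr rfl fun i _ => h1 i]
  rw [Fin.sum_univ_eq_sum_range (fun i => (s-1) * s ^ (k - 1 - i)) k]
  have h2 : ∑ i ∈ range k, (s - 1) * s ^ (k - 1 - i) = ∑ i ∈ range k, (s - 1) * s ^ i :=
    Finset.sum_range_reflect (fun i => (s - 1) * s ^ i) k
  rw [h2, ← Finset.mul_sum, geom_nat hs]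

lemma summable_digits (hs : 2 ≤ s) (a : ℕ → Fin s) :
    Summable (fun n => ((a n : ℕ) : ℝ) / (s : ℝ) ^ (n + 1)) := by
  have hs0 : (0:ℝ) < s := by positivity
  have hgeo : Summable (fun n : ℕ => ((s:ℝ)⁻¹) ^ n) := by
    apply summable_geometric_of_lt_one (by positivity)
    rw [inv_lt_one_iff₀]; right; exact_mod_cast (by omega : 1 < s)
  refine Summable.of_nonneg_of_le (fun n => by positivity) (fun n => ?_) hgeo
  have h1 : ((a n : ℕ) : ℝ) ≤ s := by
    have := (a n).isLt; exact_mod_cast this.le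
  have h2 : ((s:ℝ)⁻¹) ^ n = (s:ℝ) / (s:ℝ) ^ (n+1) := by
    rw [inv_pow, pow_succ', div_mul_eq_div_div, div_self (ne_of_gt hs0), one_div]
  rw [h2]
  exact div_le_div_of_nonneg_right h1 (by positivity)




variable {s k : ℕ}

lemma exists_digits (hs : 2 ≤ s) {x : ℝ} (hx0 : 0 ≤ x) (hx1 : x < 1)
    (hsum : ∀ a : ℕ → Fin s, Summable (fun n => ((a n : ℕ) : ℝ) / (s : ℝ) ^ (n + 1))) :
    ∃ a : ℕ → Fin s, (¬ ∃ N, ∀ n ≥ N, (a n : ℕ) = s - 1) ∧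
      x = ∑' n, ((a n : ℕ) : ℝ) / (s : ℝ) ^ (n + 1) := by
  have hs0 : (0:ℝ) < s := by positivity
  have hs1 : (1:ℝ) < s := by exact_mod_cast (by omega : 1 < s)
  set d : ℕ → ℕ := fun n => ⌊x * (s:ℝ) ^ n⌋₊ with hd
  have hnn : ∀ n : ℕ, (0:ℝ) ≤ x * (s:ℝ) ^ n := fun n => by positivity
  have hfl : ∀ n : ℕ, (d n : ℝ) ≤ x * (s:ℝ) ^ n := fun n => Nat.floor_le (hnn n)
  have hfl2 : ∀ n : ℕ, x * (s:ℝ) ^ n < d n + 1 := fun n => Nat.lt_floor_add_one _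
  have hstep : ∀ n : ℕ, s * d n ≤ d (n + 1) ∧ d (n + 1) < s * d n + s := by
    intro n
    constructor
    · rw [hd]
      rw [Nat.le_floor_iff (hnn (n+1))]
      push_cast
      calc (s:ℝ) * d n ≤ s * (x * s ^ n) := by
            have := hfl n; nlinarith
        _ = x * s ^ (n+1) := by ring
    · rw [hd, Nat.floor_lt (hnn (n+1))]
      push_cast
      calc x * (s:ℝ) ^ (n+1) = s * (x * s ^ n) := by ring
        _ < s * (d n + 1) := by have := hfl2 n; nlinarith
        _ = s * d n + s := by ring
  have d0 : d 0 = 0 := by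
    rw [hd]; simp only [pow_zero, mul_one]
    exact Nat.floor_eq_zero.mpr hx1
  set a : ℕ → Fin s := fun n => ⟨d (n+1) - s * d n, by have := hstep n; omega⟩ with ha
  have haval : ∀ n, ((a n : ℕ) : ℝ) = (d (n+1) : ℝ) - s * d n := by
    intro n
    have := (hstep n).1
    show ((d (n+1) - s * d n : ℕ) : ℝ) = _
    push_cast [this]
    ring
  have hpartial : ∀ N : ℕ, ∑ n ∈ range N, ((a n : ℕ) : ℝ) / (s:ℝ) ^ (n+1)
      = (d N : ℝ) / (s:ℝ) ^ N := by
    intro N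
    induction N with
    | zero => simp [d0]
    | succ N ih =>
      rw [sum_range_succ, ih, haval N]
      have hp : (s:ℝ) ^ N ≠ 0 := by positivity
      have hp2 : (s:ℝ) ^ (N+1) ≠ 0 := by positivity
      field_simp
      ring
  have hb1 : ∀ N : ℕ, (d N : ℝ) / (s:ℝ) ^ N ≤ x := by
    intro N
    rw [div_le_iff₀ (by positivity)]
    exact hfl N
  have hb2 : ∀ N : ℕ, x < (d N : ℝ) / (s:ℝ) ^ N + ((s:ℝ)⁻¹) ^ N := by
    intro N
    have := hfl2 N
    rw [← lt_div_iff₀ (by positivity : (0:ℝ) < (s:ℝ)^N)] at this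
    calc x < ((d N : ℝ) + 1) / s ^ N := this
      _ = (d N : ℝ) / s ^ N + (s⁻¹ : ℝ) ^ N := by
          rw [add_div, inv_pow, one_div]
  refine ⟨a, ?_, ?_⟩
  · rintro ⟨N, hN⟩
    have hcast : ((s - 1 : ℕ) : ℝ) = (s:ℝ) - 1 := by
      have : 1 ≤ s := by omega
      push_cast [this]; ring
    have hrec : ∀ M, N ≤ M → (d M : ℝ)/(s:ℝ)^M
        = (d N : ℝ)/(s:ℝ)^N + ((s:ℝ)⁻¹)^N - ((s:ℝ)⁻¹)^M := by
      intro M hM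
      induction M, hM using Nat.le_induction with
      | base => ring
      | succ M hM ih =>
        have haM := haval M
        rw [hN M (by omega), hcast] at haM
        have hdM : (d (M+1) : ℝ) = s * d M + ((s:ℝ) - 1) := by linarith
        have hp : (s:ℝ) ^ M ≠ 0 := by positivity
        have hq : (s:ℝ) ≠ 0 := by positivity
        have key : ((s:ℝ) * d M + ((s:ℝ)-1))/(s:ℝ)^(M+1)
            = (d M:ℝ)/(s:ℝ)^M + ((s:ℝ)⁻¹)^M - ((s:ℝ)⁻¹)^(M+1) := by
          rw [inv_pow, inv_pow, pow_succ]
          field_simp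
          ring
        rw [hdM, key, ih]
        ring
    set δ := (d N:ℝ)/(s:ℝ)^N + ((s:ℝ)⁻¹)^N - x with hδdef
    have hδ : 0 < δ := by have := hb2 N; simp only [hδdef]; linarith
    obtain ⟨M0, hM0⟩ := pow_unbounded_of_one_lt (δ⁻¹) hs1
    set M := max M0 N with hMdef
    have hles : (s:ℝ)^M0 ≤ (s:ℝ)^M := pow_le_pow_right₀ hs1.le (le_max_left _ _)
    have h1 : ((s:ℝ)⁻¹)^M < δ := by
      rw [inv_pow]
      have h2 : δ⁻¹ < (s:ℝ)^M := lt_of_lt_of_le hM0 hles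
      exact inv_lt_of_inv_lt₀ hδ h2
    have h2 := hb1 M
    rw [hrec M (le_max_right _ _)] at h2
    simp only [hδdef] at h1
    linarith
  · have hsa := hsum a
    have hten := hsa.hasSum.tendsto_sum_nat
    have hip : (0:ℝ) ≤ (s:ℝ)⁻¹ := by positivity
    have hilt : (s:ℝ)⁻¹ < 1 := by
      rw [inv_lt_one_iff₀]; right; exact hs1
    have hpow0 : Tendsto (fun N : ℕ => ((s:ℝ)⁻¹)^N) atTop (𝓝 0) :=
      tendsto_pow_atTop_nhds_zero_of_lt_one hip hilt
    have hten2 : Tendsto (fun N => (d N:ℝ)/(s:ℝ)^N) atTop (𝓝 x) := by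
      apply tendsto_of_tendsto_of_tendsto_of_le_of_le
        (g := fun N : ℕ => x - ((s:ℝ)⁻¹)^N) (h := fun _ : ℕ => x)
      · simpa using (tendsto_const_nhds : Tendsto (fun _ : ℕ => x) atTop (𝓝 x)).sub hpow0
      · exact tendsto_const_nhds
      · intro N; have := hb2 N; linarith
      · exact hb1
    have heq : (fun N => ∑ n ∈ range N, ((a n : ℕ) : ℝ) / (s:ℝ)^(n+1))
        = fun N => (d N:ℝ)/(s:ℝ)^N := funext hpartial
    rw [heq] at hten
    exact tendsto_nhds_unique hten2 hten


-- window lemmas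

lemma window_sum (hs : 2 ≤ s) (hk : 1 ≤ k) (m : ℕ) (u : ℕ → Fin s) :
    ∑ i ∈ range k, ((u (k*m + i) : ℕ) : ℝ) / (s:ℝ) ^ (k*m + i + 1)
      = ((val s k (fun j : Fin k => u (k*m + (j:ℕ))) : ℕ) : ℝ) / (s:ℝ) ^ (k*m + k) := by
  have hs0 : (0:ℝ) < s := by positivity
  rw [val_apply]
  push_cast
  rw [Fin.sum_univ_eq_sum_range (fun i => ((u (k*m+i) : ℕ):ℝ) * (s:ℝ) ^ (k - 1 - i)) k]
  rw [Finset.sum_div]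
  refine Finset.sum_congr rfl fun i hi => ?_
  have hik : i < k := Finset.mem_range.mp hi
  rw [div_eq_div_iff (by positivity) (by positivity)]
  rw [mul_assoc, ← pow_add]
  congr 2
  omega

lemma tsum_window (hs : 2 ≤ s) (hk : 1 ≤ k) (m : ℕ) (u w : ℕ → Fin s)
    (hsum : ∀ a : ℕ → Fin s, Summable (fun n => ((a n : ℕ) : ℝ) / (s : ℝ) ^ (n + 1)))
    (h : ∀ n, n < k*m ∨ k*m + k ≤ n → u n = w n) :
    ∑' n, ((u n : ℕ) : ℝ) / (s:ℝ) ^ (n+1)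
      = ∑' n, ((w n : ℕ) : ℝ) / (s:ℝ) ^ (n+1)
        + (((val s k (fun j : Fin k => u (k*m + (j:ℕ))) : ℕ) : ℝ)
            - ((val s k (fun j : Fin k => w (k*m + (j:ℕ))) : ℕ) : ℝ)) / (s:ℝ) ^ (k*m + k) := by
  have hu := hsum u
  have hw := hsum w
  have hdiff : ∑' n, (((u n : ℕ) : ℝ) / (s:ℝ) ^ (n+1) - ((w n : ℕ) : ℝ) / (s:ℝ) ^ (n+1))
      = ∑' n, ((u n : ℕ) : ℝ) / (s:ℝ) ^ (n+1) - ∑' n, ((w n : ℕ) : ℝ) / (s:ℝ) ^ (n+1) :=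
    Summable.tsum_sub hu hw
  set t : Finset ℕ := (range k).image (fun i => k*m + i) with ht
  have hvanish : ∀ n ∉ t, ((u n : ℕ) : ℝ) / (s:ℝ) ^ (n+1) - ((w n : ℕ) : ℝ) / (s:ℝ) ^ (n+1) = 0 := by
    intro n hn
    have : n < k*m ∨ k*m + k ≤ n := by
      by_contra hcon
      push_neg at hcon
      exact hn (Finset.mem_image.mpr ⟨n - k*m, Finset.mem_range.mpr (by omega), by omega⟩)
    rw [h n this, sub_self]
  have hts : ∑' n, (((u n : ℕ) : ℝ) / (s:ℝ) ^ (n+1) - ((w n : ℕ) : ℝ) / (s:ℝ) ^ (n+1))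
      = ∑ n ∈ t, (((u n : ℕ) : ℝ) / (s:ℝ) ^ (n+1) - ((w n : ℕ) : ℝ) / (s:ℝ) ^ (n+1)) :=
    tsum_eq_sum hvanish
  have hinj : ∀ i ∈ range k, ∀ j ∈ range k, k*m + i = k*m + j → i = j := by
    intro i _ j _ hij; omega
  rw [ht, Finset.sum_image hinj] at hts
  rw [Finset.sum_sub_distrib, window_sum hs hk m u, window_sum hs hk m w] at hts
  rw [hdiff] at hts
  rw [sub_div]
  linarith

end Stmt14

open Stmt14 Finset Filter Topology

set_option maxHeartbeats 1000000



/-- Paper's Theorem 2 for functions of type `f^s_k`: when the block permutation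
`θ` is neither the identity nor the digitwise complement (the cases giving
`x ↦ x` and `x ↦ 1 − x`), the function `f^s_k` is nowhere differentiable on
`[0,1)`. -/
theorem stmt_14 (s k : ℕ) (hs : 2 ≤ s) (hk : 1 ≤ k)
    (θ : (Fin k → Fin s) ≃ (Fin k → Fin s))
    (hθid : ¬ ∀ b : Fin k → Fin s, θ b = b)
    (hθcompl : ¬ ∀ b : Fin k → Fin s, θ b = fun i => ⟨s - 1 - (b i : ℕ), by omega⟩)
    (Θ : (ℕ → Fin s) → (ℕ → Fin s))
    (hΘ : ∀ (a : ℕ → Fin s) (m : ℕ) (i : Fin k),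
      Θ a (k * m + (i : ℕ)) = θ (fun j => a (k * m + (j : ℕ))) i)
    (F : ℝ → ℝ)
    (hF : ∀ a : ℕ → Fin s, (¬ ∃ N, ∀ n ≥ N, (a n : ℕ) = s - 1) →
      F (∑' n : ℕ, ((a n : ℕ) : ℝ) / (s : ℝ) ^ (n + 1)) =
        ∑' n : ℕ, ((Θ a n : ℕ) : ℝ) / (s : ℝ) ^ (n + 1)) :
    ∀ x ∈ Set.Ico (0 : ℝ) 1, ¬ DifferentiableAt ℝ F x := by
  intro x hx hdiff
  obtain ⟨hx0, hx1⟩ := hx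
  have hs1 : (1:ℝ) < (s:ℝ) := by exact_mod_cast (by omega : 1 < s)
  have hip : (0:ℝ) ≤ (s:ℝ)⁻¹ := by positivity
  have hilt : (s:ℝ)⁻¹ < 1 := by rw [inv_lt_one_iff₀]; right; exact hs1
  have hsum := Stmt14.summable_digits hs
  obtain ⟨a, ha, hax⟩ := Stmt14.exists_digits hs hx0 hx1 hsum
  set L := deriv F x with hLdef
  have hder : HasDerivAt F L x := hdiff.hasDerivAt
  have hslope := hasDerivAt_iff_tendsto_slope.mp hder
  obtain ⟨b, hbinf⟩ :=
    Finite.exists_infinite_fiber (fun m : ℕ => (fun j : Fin k => a (k*m + (j:ℕ))))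
  rw [Set.infinite_coe_iff] at hbinf
  set emb := hbinf.natEmbedding with hembdef
  set m : ℕ → ℕ := fun j => ((emb j : { y // y ∈ _}) : ℕ) with hmdef
  have hmb : ∀ j, (fun i : Fin k => a (k * m j + (i:ℕ))) = b := fun j => (emb j).2
  have hminj : Function.Injective m := fun j1 j2 h => emb.injective (Subtype.ext h)
  have hmtop : Tendsto m atTop atTop := hminj.nat_tendsto_atTop
  have hFx : F x = ∑' n, ((Θ a n : ℕ):ℝ)/(s:ℝ)^(n+1) := by rw [hax]; exact hF a ha
  have key : ∀ c : Fin k → Fin s,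
      ((val s k (θ c) : ℕ):ℝ) - ((val s k (θ b) : ℕ):ℝ)
        = L * (((val s k c : ℕ):ℝ) - ((val s k b : ℕ):ℝ)) := by
    intro c
    by_cases hcb : c = b
    · rw [hcb]; ring
    have hvne : val s k c ≠ val s k b := fun h => hcb (Stmt14.val_inj h)
    set Δ : ℝ := ((val s k c : ℕ):ℝ) - ((val s k b : ℕ):ℝ) with hΔ
    set Δθ : ℝ := ((val s k (θ c) : ℕ):ℝ) - ((val s k (θ b) : ℕ):ℝ) with hΔθ
    have hΔne : Δ ≠ 0 := sub_ne_zero.mpr (by exact_mod_cast hvne)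
    set y : ℕ → ℝ := fun j => x + Δ / (s:ℝ)^(k * m j + k) with hy
    have hyF : ∀ j, F (y j) = F x + Δθ / (s:ℝ)^(k * m j + k) := by
      intro j
      set M := m j with hM
      set a' : ℕ → Fin s := fun n =>
        if h : k*M ≤ n ∧ n < k*M + k then c ⟨n - k*M, by omega⟩ else a n with ha'def
      have hwin_a' : (fun i : Fin k => a' (k*M + (i:ℕ))) = c := by
        funext i
        have hcond : k*M ≤ k*M + (i:ℕ) ∧ k*M + (i:ℕ) < k*M + k :=
          ⟨by omega, by have := i.isLt; omega⟩
        show (if h : k*M ≤ k*M + (i:ℕ) ∧ k*M + (i:ℕ) < k*M + k then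
            c ⟨k*M + (i:ℕ) - k*M, by omega⟩ else a (k*M + (i:ℕ))) = c i
        rw [dif_pos hcond]
        congr 1
        ext
        simp
      have houter : ∀ n, n < k*M ∨ k*M + k ≤ n → a' n = a n := by
        intro n hn
        show (if h : k*M ≤ n ∧ n < k*M + k then c ⟨n - k*M, by omega⟩ else a n) = a n
        rw [dif_neg (by omega)]
      have ha'adm : ¬ ∃ N, ∀ n ≥ N, (a' n : ℕ) = s - 1 := by
        rintro ⟨N, hN⟩
        refine ha ⟨max N (k*M + k), fun n hn => ?_⟩
        rw [← houter n (Or.inr (by omega))]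
        exact hN n (by omega)
      have hy_eq : ∑' n, ((a' n:ℕ):ℝ)/(s:ℝ)^(n+1) = y j := by
        rw [Stmt14.tsum_window hs hk M a' a hsum houter, hwin_a', hmb j, ← hax]
      have hΘouter : ∀ n, n < k*M ∨ k*M + k ≤ n → Θ a' n = Θ a n := by
        intro n hn
        obtain ⟨q, r, hrk, rfl⟩ : ∃ q r, r < k ∧ n = k*q + r :=
          ⟨n / k, n % k, Nat.mod_lt n (by omega), ((Nat.div_add_mod n k).symm)⟩
        have hq : q ≠ M := by rintro rfl; omega
        have hwq : (fun i : Fin k => a' (k*q + (i:ℕ))) = (fun i : Fin k => a (k*q + (i:ℕ))) := by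
          funext i
          apply houter
          rcases Nat.lt_or_ge q M with h | h
          · left
            have h2 := Nat.mul_le_mul_left k (show q + 1 ≤ M by omega)
            have h3 : k*(q+1) = k*q + k := by ring
            have := i.isLt
            omega
          · right
            have h2 := Nat.mul_le_mul_left k (show M + 1 ≤ q by omega)
            have h3 : k*(M+1) = k*M + k := by ring
            omega
        have e1 := hΘ a' q ⟨r, hrk⟩
        have e2 := hΘ a q ⟨r, hrk⟩
        simp only [Fin.val_mk] at e1 e2
        rw [e1, e2, hwq]
      have hwinΘ1 : (fun i : Fin k => Θ a' (k*M + (i:ℕ))) = θ c := by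
        funext i; rw [hΘ a' M i, hwin_a']
      have hwinΘ2 : (fun i : Fin k => Θ a (k*M + (i:ℕ))) = θ b := by
        funext i; rw [hΘ a M i, hmb j]
      have hFy : F (y j) = ∑' n, ((Θ a' n : ℕ):ℝ)/(s:ℝ)^(n+1) := by
        rw [← hy_eq]; exact hF a' ha'adm
      rw [hFy, Stmt14.tsum_window hs hk M (Θ a') (Θ a) hsum hΘouter, hwinΘ1, hwinΘ2, hFx]
    have hslope_const : ∀ j, slope F x (y j) = Δθ / Δ := by
      intro j
      have hp : (s:ℝ)^(k*m j + k) ≠ 0 := by positivity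
      rw [slope_def_field, hyF j]
      have h1 : x + Δ / (s:ℝ)^(k*m j + k) - x = Δ / (s:ℝ)^(k*m j + k) := by ring
      have h2 : F x + Δθ / (s:ℝ)^(k*m j + k) - F x = Δθ / (s:ℝ)^(k*m j + k) := by ring
      show (F x + Δθ / (s:ℝ)^(k*m j + k) - F x) / (x + Δ / (s:ℝ)^(k*m j + k) - x) = Δθ / Δ
      rw [h1, h2, div_div_div_cancel_right₀]
      exact hp
    have hytend : Tendsto y atTop (𝓝[≠] x) := by
      rw [tendsto_nhdsWithin_iff]
      constructor
      · have hetop : Tendsto (fun j => k * m j + k) atTop atTop := by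
          apply tendsto_atTop_mono (fun j => ?_) hmtop
          calc m j ≤ k * m j := Nat.le_mul_of_pos_left _ (by omega)
            _ ≤ k * m j + k := Nat.le_add_right _ _
        have h0 : Tendsto (fun j => ((s:ℝ)⁻¹)^(k*m j + k)) atTop (𝓝 (0:ℝ)) :=
          (tendsto_pow_atTop_nhds_zero_of_lt_one hip hilt).comp hetop
        have hyy : y = fun j => x + Δ * ((s:ℝ)⁻¹)^(k * m j + k) := by
          funext j
          show x + Δ / (s:ℝ)^(k * m j + k) = x + Δ * ((s:ℝ)⁻¹)^(k * m j + k)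
          rw [div_eq_mul_inv, inv_pow]
        rw [hyy]
        simpa using
          ((tendsto_const_nhds : Tendsto (fun _ : ℕ => x) atTop (𝓝 x)).add (h0.const_mul Δ))
      · filter_upwards with j
        show y j ∈ {x}ᶜ
        simp only [Set.mem_compl_iff, Set.mem_singleton_iff, hy]
        intro hcon
        have hp : (s:ℝ)^(k*m j + k) ≠ 0 := by positivity
        have : Δ / (s:ℝ)^(k*m j + k) = 0 := by linarith
        exact hΔne (by field_simp at this; simpa using this)
    have hcomp := hslope.comp hytend
    have hconst : (slope F x ∘ y) = fun _ : ℕ => Δθ / Δ := funext fun j => hslope_const j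
    rw [hconst] at hcomp
    have hLD : L = Δθ / Δ := tendsto_nhds_unique hcomp tendsto_const_nhds
    rw [hΔθ] at hLD  -- maybe not needed
    field_simp [hΔne] at hLD
    linarith [hLD]
  -- endgame: the affine relation forces θ to be id or complement
  have hNge : 2 ≤ s ^ k := by
    calc 2 ≤ s := hs
      _ = s ^ 1 := (pow_one s).symm
      _ ≤ s ^ k := Nat.pow_le_pow_right (by omega) hk
  set C : ℝ := ((val s k (θ b):ℕ):ℝ) - L * ((val s k b:ℕ):ℝ) with hC
  have hAff : ∀ c, ((val s k (θ c):ℕ):ℝ) = L * ((val s k c:ℕ):ℝ) + C := by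
    intro c
    have := key c
    simp only [hC]
    linarith
  have hub : ∀ c : Fin k → Fin s, ((val s k c:ℕ):ℝ) ≤ ((s^k:ℕ):ℝ) - 1 := by
    intro c
    have h := val_lt c
    have h2 : ((val s k c:ℕ):ℝ) + 1 ≤ ((s^k:ℕ):ℝ) := by exact_mod_cast h
    linarith
  have hnn : ∀ c : Fin k → Fin s, (0:ℝ) ≤ ((val s k c:ℕ):ℝ) := fun c => Nat.cast_nonneg _
  obtain ⟨c0, hc0⟩ := val_surj (s := s) (k := k) 0 (by omega)
  obtain ⟨c1, hc1⟩ := val_surj (s := s) (k := k) (s^k - 1) (by omega)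
  set cz := θ.symm c0 with hczdef
  set cw := θ.symm c1 with hcwdef
  have hcz : val s k (θ cz) = 0 := by rw [hczdef, Equiv.apply_symm_apply]; exact hc0
  have hcw : val s k (θ cw) = s^k - 1 := by rw [hcwdef, Equiv.apply_symm_apply]; exact hc1
  have hNR : ((s^k - 1 : ℕ):ℝ) = ((s^k:ℕ):ℝ) - 1 := by
    have h1 : 1 ≤ s^k := by omega
    push_cast [h1]
    ring
  have hNpos : (0:ℝ) < ((s^k:ℕ):ℝ) - 1 := by
    have : (2:ℝ) ≤ ((s^k:ℕ):ℝ) := by exact_mod_cast hNge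
    linarith
  have e1 : (0:ℝ) = L * ((val s k cz:ℕ):ℝ) + C := by
    have h := hAff cz
    rw [hcz] at h
    simpa using h
  have e2 : ((s^k:ℕ):ℝ) - 1 = L * ((val s k cw:ℕ):ℝ) + C := by
    have h := hAff cw
    rw [hcw, hNR] at h
    linarith
  have e3 : ((val s k (θ c0):ℕ):ℝ) = C := by
    have h := hAff c0
    rw [hc0] at h
    simpa using h
  have e4 : ((val s k (θ c1):ℕ):ℝ) = L * (((s^k:ℕ):ℝ) - 1) + C := by
    have h := hAff c1
    rw [hc1, hNR] at h
    exact h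
  have hge : 1 ≤ |L| := by
    have hsub : ((s^k:ℕ):ℝ) - 1 = L * (((val s k cw:ℕ):ℝ) - ((val s k cz:ℕ):ℝ)) := by
      rw [mul_sub]; linarith [e1, e2]
    have habs : ((s^k:ℕ):ℝ) - 1 = |L| * |((val s k cw:ℕ):ℝ) - ((val s k cz:ℕ):ℝ)| := by
      calc ((s^k:ℕ):ℝ) - 1 = |((s^k:ℕ):ℝ) - 1| := (abs_of_pos hNpos).symm
        _ = |L * (((val s k cw:ℕ):ℝ) - ((val s k cz:ℕ):ℝ))| := by rw [← hsub]
        _ = |L| * |((val s k cw:ℕ):ℝ) - ((val s k cz:ℕ):ℝ)| := abs_mul _ _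
    have hbd : |((val s k cw:ℕ):ℝ) - ((val s k cz:ℕ):ℝ)| ≤ ((s^k:ℕ):ℝ) - 1 :=
      abs_le.mpr ⟨by linarith [hub cw, hnn cw, hub cz, hnn cz],
        by linarith [hub cw, hnn cw, hub cz, hnn cz]⟩
    nlinarith [abs_nonneg L, habs, hbd]
  have hle : |L| ≤ 1 := by
    have hsub : ((val s k (θ c1):ℕ):ℝ) - ((val s k (θ c0):ℕ):ℝ) = L * (((s^k:ℕ):ℝ) - 1) := by
      linarith [e3, e4]
    have h1 : |((val s k (θ c1):ℕ):ℝ) - ((val s k (θ c0):ℕ):ℝ)| ≤ ((s^k:ℕ):ℝ) - 1 :=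
      abs_le.mpr ⟨by linarith [hub (θ c1), hnn (θ c1), hub (θ c0), hnn (θ c0)],
        by linarith [hub (θ c1), hnn (θ c1), hub (θ c0), hnn (θ c0)]⟩
    have h2 : |L| * (((s^k:ℕ):ℝ) - 1) ≤ ((s^k:ℕ):ℝ) - 1 := by
      calc |L| * (((s^k:ℕ):ℝ) - 1) = |L * (((s^k:ℕ):ℝ) - 1)| := by
            rw [abs_mul, abs_of_pos hNpos]
        _ = |((val s k (θ c1):ℕ):ℝ) - ((val s k (θ c0):ℕ):ℝ)| := by rw [hsub]
        _ ≤ ((s^k:ℕ):ℝ) - 1 := h1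
    nlinarith [h2, hNpos]
  have hL1 : L = 1 ∨ L = -1 := by
    have habs1 : |L| = 1 := le_antisymm hle hge
    rcases (abs_eq (by norm_num : (0:ℝ) ≤ 1)).mp habs1 with h | h
    · exact Or.inl h
    · exact Or.inr h
  rcases hL1 with hL1 | hL1
  · have hC0 : C = 0 := by
      have h1 := hnn (θ c0)
      rw [e3] at h1
      have h2 := hub (θ c1)
      rw [e4, hL1] at h2
      linarith
    apply hθid
    intro b'
    apply Stmt14.val_inj
    have h := hAff b'
    rw [hL1, hC0] at h
    have : ((val s k (θ b'):ℕ):ℝ) = ((val s k b':ℕ):ℝ) := by linarith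
    exact_mod_cast this
  · have hCN : C = ((s^k:ℕ):ℝ) - 1 := by
      have h1 := hub (θ c0)
      rw [e3] at h1
      have h2 := hnn (θ c1)
      rw [e4, hL1] at h2
      linarith
    apply hθcompl
    intro b'
    have h := hAff b'
    rw [hL1, hCN] at h
    have hle' : val s k b' ≤ s^k - 1 := by have := val_lt (s := s) (k := k) b'; omega
    have hcast : ((s^k - 1 - val s k b' : ℕ):ℝ) = ((s^k:ℕ):ℝ) - 1 - ((val s k b':ℕ):ℝ) := by
      have h1 : 1 ≤ s^k := by omega
      push_cast [hle', h1]
      ring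
    have hval : val s k (θ b') = s^k - 1 - val s k b' := by
      have hv : ((val s k (θ b'):ℕ):ℝ) = ((s^k:ℕ):ℝ) - 1 - ((val s k b':ℕ):ℝ) := by linarith
      rw [← hcast] at hv
      exact_mod_cast hv
    have hcompl := val_compl hs b'
    exact Stmt14.val_inj (by omega : val s k (θ b')
      = val s k (fun i => (⟨s - 1 - (b' i : ℕ), by omega⟩ : Fin s)))
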